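/- arXiv:1001.0419 — 6 statements merged into one kernel-verified Lean document; each statement's English description precedes it below -/
import Mathlib

section
/- Let a group Γ act on a compact Hausdorff space X by homeomorphisms, and let ϑ be a continuous pseudometric on X. For every ε > 0, every λ > 1, and every p with 1 ≤ p < ∞, there exists ε' > 0 such that for every nonempty finite subset F ⊆ Γ and every finite [ϑ,F,∞,ε]-separated subset E ⊆ X, there exists a [ϑ,F,p,ε']-separated subset E' ⊆ X with card(E) ≤ λ^{|F|} · card(E'). -/
open Finset

theorem my_greedy {α : Type*} [DecidableEq α] (r : α → α → Prop) [DecidableRel r]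
    (hsym : ∀ x y, r x y → r y x) (D : ℝ) :
    ∀ (n : ℕ) (E : Finset α), E.card = n → (∀ x ∈ E, r x x) →
      (∀ x ∈ E, ((E.filter fun y => r x y).card : ℝ) ≤ D) →
      ∃ E', E' ⊆ E ∧ (∀ x ∈ E', ∀ y ∈ E', x ≠ y → ¬ r x y) ∧
        (E.card : ℝ) ≤ D * E'.card := by
  intro n
  induction n using Nat.strong_induction_on with
  | _ n ih =>
    intro E hcard hrefl hdeg
    rcases E.eq_empty_or_nonempty with rfl | ⟨x, hx⟩
    · exact ⟨∅, Finset.Subset.refl _, by simp, by simp⟩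
    · set E₂ := E.filter (fun y => ¬ r x y) with hE₂
      have hsub : E₂ ⊆ E := Finset.filter_subset _ _
      have hxNx : x ∈ E.filter fun y => r x y := Finset.mem_filter.2 ⟨hx, hrefl x hx⟩
      have hcard_split : (E.filter fun y => r x y).card + E₂.card = E.card :=
        Finset.card_filter_add_card_filter_not _
      have hlt : E₂.card < n := by
        rw [← hcard]
        have h1 : 1 ≤ (E.filter fun y => r x y).card := Finset.card_pos.2 ⟨x, hxNx⟩
        omega
      obtain ⟨E'', hsub'', hpair'', hle''⟩ := ih E₂.card hlt E₂ rfl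
        (fun z hz => hrefl z (hsub hz))
        (fun z hz => le_trans (by
          exact_mod_cast Finset.card_le_card (Finset.filter_subset_filter _ hsub))
          (hdeg z (hsub hz)))
      have hxE'' : x ∉ E'' := fun h => (Finset.mem_filter.1 (hsub'' h)).2 (hrefl x hx)
      refine ⟨insert x E'', ?_, ?_, ?_⟩
      · exact Finset.insert_subset hx (hsub''.trans hsub)
      · intro a ha b hb hab
        rcases Finset.mem_insert.1 ha with rfl | ha'
        · rcases Finset.mem_insert.1 hb with rfl | hb'
          · exact absurd rfl hab
          · exact (Finset.mem_filter.1 (hsub'' hb')).2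
        · rcases Finset.mem_insert.1 hb with rfl | hb'
          · exact fun h => (Finset.mem_filter.1 (hsub'' ha')).2 (hsym _ _ h)
          · exact hpair'' a ha' b hb' hab
      · have hD1 : (1 : ℝ) ≤ D := by
          have h1 : (1 : ℝ) ≤ ((E.filter fun y => r x y).card : ℝ) := by
            exact_mod_cast Finset.card_pos.2 ⟨x, hxNx⟩
          exact h1.trans (hdeg x hx)
        rw [Finset.card_insert_of_notMem hxE'']
        have := hdeg x hx
        push_cast
        have h2 : (E.card : ℝ) = ((E.filter fun y => r x y).card : ℝ) + E₂.card := by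
          exact_mod_cast hcard_split.symm
        rw [h2]
        nlinarith [hle'']

lemma card_filter_subtype {Γ : Type*} (F : Finset Γ) (p : Γ → Prop) [DecidablePred p] :
    (Finset.univ.filter fun γ : {γ // γ ∈ F} => p γ.1).card = (F.filter p).card := by
  rw [Finset.univ_eq_attach, Finset.filter_attach]
  simp

set_option maxHeartbeats 800000 in
/-- Comparison of `ℓ^∞`- and `ℓ^p`-separated sets (Lemma 4.1): for every `ε > 0`, `λ > 1`
and `1 ≤ p < ∞` there is `ε' > 0` such that any `[ϑ,F,∞,ε]`-separated set `E` admits a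
`[ϑ,F,p,ε']`-separated set `E'` with `card E ≤ λ^{|F|} · card E'`. -/
theorem stmt3 {Γ X : Type*} [Group Γ] [TopologicalSpace X] [CompactSpace X] [T2Space X]
    [MulAction Γ X] (hact : ∀ γ : Γ, Continuous fun x : X => γ • x)
    (ϑ : X → X → ℝ) (hcont : Continuous fun q : X × X => ϑ q.1 q.2)
    (hsymm : ∀ x y, ϑ x y = ϑ y x) (hnonneg : ∀ x y, 0 ≤ ϑ x y)
    (hdiag : ∀ x, ϑ x x = 0) (htri : ∀ x y z, ϑ x z ≤ ϑ x y + ϑ y z)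
    (ε lam p : ℝ) (hε : 0 < ε) (hlam : 1 < lam) (hp : 1 ≤ p) :
    ∃ ε' : ℝ, 0 < ε' ∧ ∀ (F : Finset Γ) (hF : F.Nonempty) (E : Finset X),
      (∀ x ∈ E, ∀ y ∈ E, x ≠ y → ε < F.sup' hF fun γ => ϑ (γ • x) (γ • y)) →
      ∃ E' : Finset X,
        (∀ x ∈ E', ∀ y ∈ E', x ≠ y →
          ε' < ((F.card : ℝ)⁻¹ * ∑ γ ∈ F, ϑ (γ • x) (γ • y) ^ p) ^ (1 / p)) ∧
        (E.card : ℝ) ≤ lam ^ F.card * E'.card := by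
  classical
  have hp0 : (0:ℝ) < p := lt_of_lt_of_le one_pos hp
  -- a finite ε/4-cover of X
  obtain ⟨t, ht⟩ : ∃ t : Finset X, ∀ y : X, ∃ z ∈ t, ϑ z y < ε/4 := by
    have hopen : ∀ z : X, IsOpen {w : X | ϑ z w < ε/4} := by
      intro z
      have hc : Continuous fun w : X => ϑ z w := hcont.comp (Continuous.prodMk_right z)
      exact isOpen_lt hc continuous_const
    have hcov : (Set.univ : Set X) ⊆ ⋃ z : X, {w : X | ϑ z w < ε/4} := by
      intro y _
      exact Set.mem_iUnion.2 ⟨y, by simp only [Set.mem_setOf_eq, hdiag y]; linarith⟩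
    obtain ⟨s, hs⟩ := IsCompact.elim_finite_subcover isCompact_univ _ hopen hcov
    refine ⟨s, fun y => ?_⟩
    have := hs (Set.mem_univ y)
    simpa using this
  choose c hc1 hc2 using ht
  set N := t.card with hN
  set sq := Real.sqrt lam with hsqdef
  have hlam0 : (0:ℝ) ≤ lam := le_of_lt (lt_trans one_pos hlam)
  have hsq1 : 1 < sq := by
    rw [hsqdef]
    rw [show (1:ℝ) < Real.sqrt lam ↔ (1:ℝ)^2 < lam from Real.lt_sqrt (by norm_num)]
    simpa using hlam
  have hsq0 : (0:ℝ) < sq := lt_trans one_pos hsq1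
  have hsqsq : sq * sq = lam := Real.mul_self_sqrt hlam0
  set t0 : ℝ := min 1 ((sq - 1)/(N+1)) with ht0def
  have ht0pos : 0 < t0 := lt_min one_pos (div_pos (by linarith) (by positivity))
  have ht0le1 : t0 ≤ 1 := min_le_left _ _
  have hNt0 : (N:ℝ) * t0 ≤ sq - 1 := by
    have h1 : t0 ≤ (sq - 1)/(N+1) := min_le_right _ _
    have h2 : (N:ℝ) * t0 ≤ (N:ℝ) * ((sq-1)/(N+1)) :=
      mul_le_mul_of_nonneg_left h1 (Nat.cast_nonneg N)
    have h3 : (N:ℝ) * ((sq-1)/(N+1)) ≤ sq - 1 := by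
      rw [mul_div_assoc'] -- maybe
      rw [div_le_iff₀ (by positivity)]
      nlinarith [Nat.cast_nonneg (α := ℝ) N, hsq1]
    linarith
  set L : ℝ := -Real.log t0 with hLdef
  have hL0 : 0 ≤ L := by
    have := Real.log_nonpos ht0pos.le ht0le1
    simp [hLdef]; linarith
  have hlogsq : 0 < Real.log sq := Real.log_pos hsq1
  set b : ℝ := min 1 (Real.log sq / (L + 1)) with hbdef
  have hb0 : 0 < b := lt_min one_pos (div_pos hlogsq (by linarith))
  have hb1 : b ≤ 1 := min_le_left _ _
  have hbL : b * L ≤ Real.log sq := by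
    have h1 : b ≤ Real.log sq / (L+1) := min_le_right _ _
    have h2 : b * (L+1) ≤ Real.log sq := by
      rw [← le_div_iff₀ (by linarith : (0:ℝ) < L + 1)]; exact h1
    nlinarith
  have hexp : t0 ^ (-b : ℝ) ≤ sq := by
    rw [Real.rpow_def_of_pos ht0pos]
    have : Real.log t0 * (-b) = b * L := by rw [hLdef]; ring
    rw [this]
    calc Real.exp (b * L) ≤ Real.exp (Real.log sq) := Real.exp_le_exp.2 hbL
      _ = sq := Real.exp_log hsq0
  refine ⟨b ^ (1/p) * (ε/4), mul_pos (Real.rpow_pos_of_pos hb0 _) (by linarith), ?_⟩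
  intro F hF E hsep
  set n := F.card with hn
  have hn1 : 1 ≤ n := Finset.card_pos.2 hF
  have hn0 : (0:ℝ) < n := by exact_mod_cast hn1
  -- adjacency relation
  set r : X → X → Prop := fun x y =>
    ((F.filter fun γ => ε/2 < ϑ (γ • x) (γ • y)).card : ℝ) < b * n with hrdef
  have hsymr : ∀ x y, r x y → r y x := by
    intro x y h
    have : (F.filter fun γ => ε/2 < ϑ (γ • y) (γ • x)) =
        (F.filter fun γ => ε/2 < ϑ (γ • x) (γ • y)) := by
      apply Finset.filter_congr; intro γ _; rw [hsymm]
    simpa [hrdef, this] using h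
  have hrefl : ∀ x ∈ E, r x x := by
    intro x _
    show ((F.filter fun γ => ε/2 < ϑ (γ • x) (γ • x)).card : ℝ) < b * n
    have hemp : (F.filter fun γ => ε/2 < ϑ (γ • x) (γ • x)) = ∅ :=
      Finset.filter_false_of_mem (fun γ _ => by rw [hdiag]; linarith)
    rw [hemp, Finset.card_empty, Nat.cast_zero]
    exact mul_pos hb0 hn0
  -- degree bound
  have hdeg : ∀ x ∈ E, ((E.filter fun y => r x y).card : ℝ) ≤ lam ^ n := by
    intro x hxE
    set ι := {γ : Γ // γ ∈ F}
    set Φ := Fintype.piFinset (fun _ : ι => insert (none : Option X) (t.image some)) with hΦdef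
    set B := Φ.filter fun f =>
      ((Finset.univ.filter fun γ : ι => f γ ≠ none).card : ℝ) < b * n with hBdef
    set φ : X → ι → Option X := fun y γ =>
      if ε/2 < ϑ (γ.1 • x) (γ.1 • y) then some (c (γ.1 • y)) else none with hφdef
    -- injection into B
    have hinj : ((E.filter fun y => r x y).card : ℝ) ≤ (B.card : ℝ) := by
      have hmaps : ∀ y ∈ E.filter fun y => r x y, φ y ∈ B := by
        intro y hy
        obtain ⟨hyE, hyr⟩ := Finset.mem_filter.1 hy
        refine Finset.mem_filter.2 ⟨?_, ?_⟩
        · refine Fintype.mem_piFinset.2 fun γ => ?_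
          by_cases h : ε/2 < ϑ (γ.1 • x) (γ.1 • y)
          · simp only [hφdef, if_pos h]
            exact Finset.mem_insert_of_mem (Finset.mem_image_of_mem some (hc1 _))
          · simp only [hφdef, if_neg h]
            exact Finset.mem_insert_self _ _
        · have hcardeq : (Finset.univ.filter fun γ : ι => φ y γ ≠ none).card =
              (F.filter fun γ => ε/2 < ϑ (γ • x) (γ • y)).card := by
            have heq : (Finset.univ.filter fun γ : ι => φ y γ ≠ none) =
                (Finset.univ.filter fun γ : ι => ε/2 < ϑ (γ.1 • x) (γ.1 • y)) := by
              apply Finset.filter_congr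
              intro γ _
              by_cases h : ε/2 < ϑ (γ.1 • x) (γ.1 • y) <;> simp [hφdef, h]
            rw [heq]
            exact card_filter_subtype F (fun γ => ε/2 < ϑ (γ • x) (γ • y))
          rw [hcardeq]
          exact hyr
      have hinjOn : Set.InjOn φ (E.filter fun y => r x y) := by
        intro y hy y' hy' heq
        by_contra hne
        have hyE : y ∈ E := (Finset.mem_filter.1 (Finset.mem_coe.1 hy)).1
        have hy'E : y' ∈ E := (Finset.mem_filter.1 (Finset.mem_coe.1 hy')).1
        obtain ⟨γ, hγF, hγ⟩ := (Finset.lt_sup'_iff hF).1 (hsep y hyE y' hy'E hne)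
        have h := congrFun heq ⟨γ, hγF⟩
        simp only [hφdef] at h
        by_cases h1 : ε/2 < ϑ (γ • x) (γ • y) <;>
          by_cases h2 : ε/2 < ϑ (γ • x) (γ • y')
        · rw [if_pos h1, if_pos h2] at h
          have hcc : c (γ • y) = c (γ • y') := Option.some.inj h
          have k1 := hc2 (γ • y)
          have k2 := hc2 (γ • y')
          rw [hcc] at k1
          have k3 : ϑ (γ • y) (γ • y') ≤ ϑ (γ • y) (c (γ • y')) + ϑ (c (γ • y')) (γ • y') :=
            htri _ _ _
          rw [hsymm (γ • y) (c (γ • y'))] at k3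
          linarith
        · rw [if_pos h1, if_neg h2] at h; exact Option.some_ne_none _ h
        · rw [if_neg h1, if_pos h2] at h; exact Option.some_ne_none _ h.symm
        · push_neg at h1 h2
          have k3 : ϑ (γ • y) (γ • y') ≤ ϑ (γ • y) (γ • x) + ϑ (γ • x) (γ • y') :=
            htri _ _ _
          rw [hsymm (γ • y) (γ • x)] at k3
          linarith
      exact_mod_cast Finset.card_le_card_of_injOn φ hmaps hinjOn
    -- counting B
    have hcount : (B.card : ℝ) * t0 ^ (b * (n:ℝ)) ≤ (1 + (N:ℝ) * t0) ^ n := by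
      have hwB : ∀ f ∈ B, t0 ^ (b * (n:ℝ)) ≤ ∏ γ : ι, (if f γ = none then (1:ℝ) else t0) := by
        intro f hfB
        obtain ⟨_, hsupp⟩ := Finset.mem_filter.1 hfB
        have hprod : ∏ γ : ι, (if f γ = none then (1:ℝ) else t0) =
            t0 ^ (Finset.univ.filter fun γ : ι => f γ ≠ none).card := by
          rw [Finset.prod_ite]
          simp [Finset.prod_const]
        rw [hprod, ← Real.rpow_natCast t0]
        exact Real.rpow_le_rpow_of_exponent_ge ht0pos ht0le1 (le_of_lt hsupp)
      calc (B.card : ℝ) * t0 ^ (b * (n:ℝ))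
          ≤ ∑ f ∈ B, ∏ γ : ι, (if f γ = none then (1:ℝ) else t0) := by
            have := Finset.card_nsmul_le_sum B
              (fun f => ∏ γ : ι, (if f γ = none then (1:ℝ) else t0)) (t0 ^ (b * (n:ℝ))) hwB
            simpa [nsmul_eq_mul] using this
        _ ≤ ∑ f ∈ Φ, ∏ γ : ι, (if f γ = none then (1:ℝ) else t0) := by
            apply Finset.sum_le_sum_of_subset_of_nonneg (Finset.filter_subset _ _)
            intro f _ _
            apply Finset.prod_nonneg
            intro γ _
            by_cases h : f γ = none <;> simp [h] <;> linarith
        _ = (1 + (N:ℝ) * t0) ^ n := by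
            have hps := Finset.prod_univ_sum (fun _ : ι => insert (none : Option X) (t.image some))
              (fun (_ : ι) (o : Option X) => if o = none then (1:ℝ) else t0)
            rw [hΦdef, ← hps]
            have hone : ∀ γ : ι, ∑ o ∈ insert (none : Option X) (t.image some),
                (if o = none then (1:ℝ) else t0) = 1 + (N:ℝ) * t0 := by
              intro γ
              rw [Finset.sum_insert (by simp)]
              rw [Finset.sum_image (fun a _ b _ h => Option.some.inj h)]
              simp [Finset.sum_const, hN, mul_comm]
            rw [Finset.prod_congr rfl (fun γ _ => hone γ), Finset.prod_const]
            congr 1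
            exact Fintype.card_coe F
    -- conclude
    have hTn : (0:ℝ) < (t0 ^ (b:ℝ)) ^ n := pow_pos (Real.rpow_pos_of_pos ht0pos _) n
    have hsplit : t0 ^ (b * (n:ℝ)) = (t0 ^ (b:ℝ)) ^ n := by
      rw [Real.rpow_mul ht0pos.le, Real.rpow_natCast]
    have hB2 : (B.card : ℝ) ≤ ((1 + (N:ℝ) * t0) / t0 ^ (b:ℝ)) ^ n := by
      rw [div_pow]
      rw [le_div_iff₀ hTn]
      rw [← hsplit]
      exact hcount
    have hfrac : (1 + (N:ℝ) * t0) / t0 ^ (b:ℝ) ≤ sq * sq := by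
      rw [div_eq_mul_inv, ← Real.rpow_neg ht0pos.le]
      have h1 : 1 + (N:ℝ) * t0 ≤ sq := by linarith
      have h2 : (0:ℝ) ≤ 1 + (N:ℝ) * t0 := by nlinarith [mul_nonneg (Nat.cast_nonneg (α := ℝ) N) ht0pos.le]
      exact mul_le_mul h1 hexp (Real.rpow_nonneg ht0pos.le _) hsq0.le
    have hlast : ((1 + (N:ℝ) * t0) / t0 ^ (b:ℝ)) ^ n ≤ lam ^ n := by
      have h2' : (0:ℝ) ≤ 1 + (N:ℝ) * t0 := by
        nlinarith [mul_nonneg (Nat.cast_nonneg (α := ℝ) N) ht0pos.le]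
      have hbase : (0:ℝ) ≤ (1 + (N:ℝ) * t0) / t0 ^ (b:ℝ) :=
        div_nonneg h2' (Real.rpow_nonneg ht0pos.le _)
      rw [← hsqsq]
      exact pow_le_pow_left₀ hbase hfrac n
    linarith
  -- apply greedy
  obtain ⟨E', hsubE', hpair, hcard⟩ := my_greedy r hsymr (lam ^ n) E.card E rfl hrefl hdeg
  refine ⟨E', ?_, hcard⟩
  intro x hx y hy hxy
  have hnr := hpair x hx y hy hxy
  simp only [hrdef, not_lt] at hnr
  set G := F.filter fun γ => ε/2 < ϑ (γ • x) (γ • y) with hGdef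
  have hsum1 : (G.card : ℝ) * (ε/2) ^ p ≤ ∑ γ ∈ G, ϑ (γ • x) (γ • y) ^ p := by
    have := Finset.card_nsmul_le_sum G (fun γ => ϑ (γ • x) (γ • y) ^ p) ((ε/2) ^ p)
      (fun γ hγ => Real.rpow_le_rpow (by linarith)
        (le_of_lt (Finset.mem_filter.1 hγ).2) hp0.le)
    simpa [nsmul_eq_mul] using this
  have hsum2 : ∑ γ ∈ G, ϑ (γ • x) (γ • y) ^ p ≤ ∑ γ ∈ F, ϑ (γ • x) (γ • y) ^ p := by
    apply Finset.sum_le_sum_of_subset_of_nonneg (Finset.filter_subset _ _)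
    intro γ _ _
    exact Real.rpow_nonneg (hnonneg _ _) _
  have hkey : b * (ε/2) ^ p ≤ (F.card : ℝ)⁻¹ * ∑ γ ∈ F, ϑ (γ • x) (γ • y) ^ p := by
    have h1 : b * (n:ℝ) * (ε/2) ^ p ≤ ∑ γ ∈ F, ϑ (γ • x) (γ • y) ^ p := by
      calc b * (n:ℝ) * (ε/2) ^ p ≤ (G.card : ℝ) * (ε/2) ^ p :=
            mul_le_mul_of_nonneg_right hnr (Real.rpow_nonneg (by linarith) _)
        _ ≤ _ := le_trans hsum1 hsum2
    have hnne : ((n:ℕ):ℝ) ≠ 0 := ne_of_gt hn0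
    have heq2 : b * (ε/2) ^ p = ((n:ℕ):ℝ)⁻¹ * (b * ((n:ℕ):ℝ) * (ε/2) ^ p) := by
      have h3 : ((n:ℕ):ℝ)⁻¹ * (b * ((n:ℕ):ℝ) * (ε/2) ^ p) =
          (((n:ℕ):ℝ)⁻¹ * ((n:ℕ):ℝ)) * (b * (ε/2) ^ p) := by ring
      rw [h3, inv_mul_cancel₀ hnne, one_mul]
    rw [← hn, heq2]
    exact mul_le_mul_of_nonneg_left h1 (inv_nonneg.2 hn0.le)
  have hrpow : (b * (ε/2) ^ p) ^ (1/p) = b ^ (1/p) * (ε/2) := by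
    rw [Real.mul_rpow hb0.le (Real.rpow_nonneg (by linarith) _)]
    congr 1
    rw [← Real.rpow_mul (by linarith : (0:ℝ) ≤ ε/2), mul_one_div_cancel (ne_of_gt hp0),
      Real.rpow_one]
  calc b ^ (1/p) * (ε/4) < b ^ (1/p) * (ε/2) := by
        have : (0:ℝ) < b ^ (1/p) := Real.rpow_pos_of_pos hb0 _
        nlinarith
    _ = (b * (ε/2) ^ p) ^ (1/p) := hrpow.symm
    _ ≤ ((F.card : ℝ)⁻¹ * ∑ γ ∈ F, ϑ (γ • x) (γ • y) ^ p) ^ (1/p) :=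
        Real.rpow_le_rpow (mul_nonneg hb0.le (Real.rpow_nonneg (by linarith) _)) hkey
          (one_div_nonneg.2 hp0.le)
end

section
/- There exists a universal constant C > 0 such that for every λ > 1 there is δ > 0 so that for every nonempty finite set Y, every positive integer n with |Y| ≤ δn, and every real M ≥ 1, the number of functions x : Y → ℤ with ∑_{y∈Y} x(y)² ≤ M²·n is at most C · λⁿ · M^{|Y|}. -/
/-!
Exponential moments (Rankin's trick): for every `t > 0`, the number of `x ∈ ℤ^Y` with
`∑ x(y)² ≤ R` is at most `e^{tR} θ(t)^{|Y|}`, where `θ(t) = ∑_{k ∈ ℤ} e^{-tk²} ≤ 6/√t` for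
`t ≤ 1/4`. Taking `t = |Y|/R` with `R = M²n` gives the bound `(6eM√(n/|Y|))^{|Y|}`, and
`6e√m ≤ λ^m` once `m = n/|Y|` exceeds `(6e / log λ)²`.
-/

universe u

open Finset Real

theorem sum_Icc_exp_neg_mul_sq_le {t : ℝ} (ht : 0 < t) (ht' : t ≤ 1 / 4) (K : ℕ) :
    ∑ k ∈ Icc (-(K : ℤ)) K, exp (-(t * (k : ℝ) ^ 2)) ≤ 6 / √t := by
  set s := √t
  set r := exp (-(2 * s))
  have hs : 0 < s := sqrt_pos.2 ht
  have hst : s ^ 2 = t := sq_sqrt ht.le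
  have hs' : s ≤ 1 / 2 := by nlinarith
  -- `t j² = (s j)² ≥ 2 s j - 1`
  have hterm (j : ℕ) : exp (-(t * (j : ℝ) ^ 2)) ≤ exp 1 * r ^ j := by
    rw [← exp_nat_mul, ← exp_add]
    exact exp_le_exp.2 (by nlinarith [sq_nonneg (s * j - 1)])
  -- `e^{-2s} ≤ 1 / (1 + 2s) ≤ 1 - s` because `s ≤ 1/2`
  have hr : r ≤ 1 - s := by
    have h : r * exp (2 * s) = 1 := by rw [← exp_add]; simp
    nlinarith [add_one_le_exp (2 * s), exp_pos (-(2 * s))]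
  have hgeom : ∑ j ∈ range (K + 1), r ^ j ≤ 1 / s := by
    calc ∑ j ∈ range (K + 1), r ^ j ≤ r ^ 0 / (1 - r) := by
          rw [range_eq_Ico]; exact geom_sum_Ico_le_of_lt_one (exp_pos _).le (by linarith)
      _ ≤ 1 / s := by rw [pow_zero]; gcongr; linarith
  have hcover : Icc (-(K : ℤ)) K ⊆
      (range (K + 1) ×ˢ ({1, -1} : Finset ℤ)).image fun p : ℕ × ℤ => p.2 * p.1 := by
    intro k hk
    rw [mem_Icc] at hk
    simp only [mem_image, mem_product, mem_range, mem_insert, mem_singleton, Prod.exists]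
    rcases le_total 0 k with h | h
    · exact ⟨k.toNat, 1, ⟨by omega, Or.inl rfl⟩, by omega⟩
    · exact ⟨(-k).toNat, -1, ⟨by omega, Or.inr rfl⟩, by omega⟩
  calc ∑ k ∈ Icc (-(K : ℤ)) K, exp (-(t * (k : ℝ) ^ 2))
      ≤ ∑ k ∈ (range (K + 1) ×ˢ ({1, -1} : Finset ℤ)).image (fun p : ℕ × ℤ => p.2 * p.1),
          exp (-(t * (k : ℝ) ^ 2)) :=
        sum_le_sum_of_subset_of_nonneg hcover fun _ _ _ => (exp_pos _).le
    _ ≤ ∑ p ∈ range (K + 1) ×ˢ ({1, -1} : Finset ℤ), exp (-(t * ((p.2 * p.1 : ℤ) : ℝ) ^ 2)) :=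
        sum_image_le_of_nonneg fun _ _ => (exp_pos _).le
    _ = 2 * ∑ j ∈ range (K + 1), exp (-(t * (j : ℝ) ^ 2)) := by
        rw [sum_product, mul_sum]
        refine sum_congr rfl fun j _ => ?_
        rw [sum_pair (by norm_num)]
        push_cast
        ring_nf
    _ ≤ 2 * (exp 1 * ∑ j ∈ range (K + 1), r ^ j) := by
        rw [mul_sum (s := range (K + 1)) (a := exp 1)]; gcongr with j; exact hterm j
    _ ≤ 2 * (3 * (1 / s)) := by gcongr; exact exp_one_lt_three.le
    _ = 6 / s := by ring

theorem card_filter_piFinset_le_exp_mul {ι α : Type*} [Fintype ι] [DecidableEq ι]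
    (A : Finset α) (f : α → ℝ) (R : ℝ) {t : ℝ} (ht : 0 ≤ t) :
    (#{x ∈ Fintype.piFinset fun _ : ι => A | ∑ i, f (x i) ≤ R} : ℝ) ≤
      exp (t * R) * (∑ a ∈ A, exp (-(t * f a))) ^ Fintype.card ι := by
  calc (#{x ∈ Fintype.piFinset fun _ : ι => A | ∑ i, f (x i) ≤ R} : ℝ)
      = ∑ x ∈ Fintype.piFinset fun _ : ι => A with ∑ i, f (x i) ≤ R, (1 : ℝ) := by simp
    _ ≤ ∑ x ∈ Fintype.piFinset fun _ : ι => A with ∑ i, f (x i) ≤ R,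
          exp (t * (R - ∑ i, f (x i))) :=
        sum_le_sum fun x hx => one_le_exp (mul_nonneg ht (sub_nonneg.2 (mem_filter.1 hx).2))
    _ ≤ ∑ x ∈ Fintype.piFinset fun _ : ι => A, exp (t * (R - ∑ i, f (x i))) :=
        sum_le_sum_of_subset_of_nonneg (filter_subset _ _) fun _ _ _ => (exp_pos _).le
    _ = ∑ x ∈ Fintype.piFinset fun _ : ι => A, exp (t * R) * ∏ i, exp (-(t * f (x i))) := by
        refine sum_congr rfl fun x _ => ?_
        rw [← exp_sum, ← exp_add, sum_neg_distrib, ← mul_sum, mul_sub, sub_eq_add_neg]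
    _ = exp (t * R) * (∑ a ∈ A, exp (-(t * f a))) ^ Fintype.card ι := by
        rw [← mul_sum, sum_prod_piFinset A fun _ a => exp (-(t * f a)), prod_const, card_univ]

theorem mul_sqrt_le_exp_mul {c L m : ℝ} (hc : 0 ≤ c) (hL : 0 ≤ L) (hm : 0 ≤ m)
    (h : c ^ 2 ≤ m * L ^ 2) :
    c * √m ≤ exp (m * L) :=
  calc c * √m = √(c ^ 2 * m) := by rw [sqrt_mul (sq_nonneg c), sqrt_sq hc]
    _ ≤ √((m * L) ^ 2) := sqrt_le_sqrt (by nlinarith)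
    _ = m * L := sqrt_sq (mul_nonneg hm hL)
    _ ≤ exp (m * L) := by linarith [add_one_le_exp (m * L)]

theorem setOf_sum_sq_le_eq_filter {Y : Type*} [Fintype Y] [DecidableEq Y] (R : ℝ) :
    {x : Y → ℤ | ∑ y, (x y : ℝ) ^ 2 ≤ R} =
      ↑{x ∈ Fintype.piFinset fun _ : Y => Icc (-(⌊√R⌋₊ : ℤ)) (⌊√R⌋₊ : ℤ) |
        ∑ y, ((x y : ℤ) : ℝ) ^ 2 ≤ R} := by
  ext x
  simp only [Set.mem_ofPred_eq, coe_filter, Fintype.mem_piFinset, mem_Icc, iff_and_self]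
  intro hx y
  have h : |(x y : ℝ)| ≤ √R :=
    abs_le_sqrt ((single_le_sum (fun i _ => sq_nonneg ((x i : ℝ))) (mem_univ y)).trans hx)
  have : (x y).natAbs ≤ ⌊√R⌋₊ := Nat.le_floor (by rw [Nat.cast_natAbs]; exact_mod_cast h)
  omega

theorem natCard_sum_sq_le_pow {Y : Type*} [Fintype Y] [Nonempty Y] {R : ℝ}
    (hR : 4 * Fintype.card Y ≤ R) :
    (Nat.card {x : Y → ℤ // ∑ y, (x y : ℝ) ^ 2 ≤ R} : ℝ) ≤
      (6 * exp 1 * √(R / Fintype.card Y)) ^ Fintype.card Y := by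
  classical
  set d := Fintype.card Y
  have hd : (0 : ℝ) < d := by exact_mod_cast Fintype.card_pos
  have hR0 : 0 < R := by linarith
  set t := d / R
  have ht : 0 < t := by positivity
  have ht' : t ≤ 1 / 4 := by rw [div_le_iff₀ hR0]; linarith
  have hcard : Nat.card {x : Y → ℤ // ∑ y, (x y : ℝ) ^ 2 ≤ R} =
      #{x ∈ Fintype.piFinset fun _ : Y => Icc (-(⌊√R⌋₊ : ℤ)) (⌊√R⌋₊ : ℤ) |
        ∑ y, ((x y : ℤ) : ℝ) ^ 2 ≤ R} := by
    rw [← Set.coe_ofPred, Nat.card_coe_set_eq, setOf_sum_sq_le_eq_filter, Set.ncard_coe_finset]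
  rw [hcard]
  calc _ ≤ exp (t * R) *
          (∑ k ∈ Icc (-(⌊√R⌋₊ : ℤ)) (⌊√R⌋₊ : ℤ), exp (-(t * (k : ℝ) ^ 2))) ^ d :=
        card_filter_piFinset_le_exp_mul _ (fun k : ℤ => (k : ℝ) ^ 2) R ht.le
    _ ≤ exp (t * R) * (6 / √t) ^ d := by
        gcongr
        exact sum_Icc_exp_neg_mul_sq_le ht ht' _
    _ = (6 * exp 1 * √(R / d)) ^ d := by
        have h6 : 6 / √t = 6 * √(R / d) := by
          rw [show t = (R / d)⁻¹ from (inv_div R d).symm, sqrt_inv, div_inv_eq_mul]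
        rw [div_mul_cancel₀ _ hR0.ne', h6, ← exp_one_pow, ← mul_pow]
        ring_nf

theorem pow_mul_sqrt_div_le_pow {c lam : ℝ} (hc : 0 ≤ c) (hlam : 1 < lam) {d n : ℕ} (hd : 0 < d)
    (h : c ^ 2 * d ≤ n * log lam ^ 2) : (c * √(n / d)) ^ d ≤ lam ^ n := by
  have hd' : (0 : ℝ) < d := by exact_mod_cast hd
  calc (c * √(n / d)) ^ d ≤ exp (n / d * log lam) ^ d := by
        gcongr
        refine mul_sqrt_le_exp_mul hc (log_pos hlam).le (by positivity) ?_
        rw [div_mul_eq_mul_div, le_div_iff₀ hd']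
        linarith
    _ = lam ^ n := by
        rw [← exp_nat_mul, ← mul_assoc, mul_div_cancel₀ _ hd'.ne', exp_nat_mul,
          exp_log (by linarith)]

/-- Counting lattice points in balls (Lemma 5.1): there is a universal `C > 0` such that
for every `λ > 1` there is `δ > 0` so that for any nonempty finite set `Y`, any `n ≥ 1`
with `|Y| ≤ δ n` and any `M ≥ 1`, the number of `x ∈ ℤ^Y` with `‖x‖₂ ≤ M n^{1/2}` is at
most `C λ^n M^{|Y|}`. -/
theorem stmt5 : ∃ C : ℝ, 0 < C ∧ ∀ lam : ℝ, 1 < lam → ∃ δ : ℝ, 0 < δ ∧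
    ∀ (Y : Type u) [Fintype Y], Nonempty Y → ∀ n : ℕ, 0 < n →
      (Fintype.card Y : ℝ) ≤ δ * n → ∀ M : ℝ, 1 ≤ M →
      {x : Y → ℤ | (∑ y : Y, (x y : ℝ) ^ 2) ≤ M ^ 2 * n}.Finite ∧
      (Nat.card {x : Y → ℤ // (∑ y : Y, (x y : ℝ) ^ 2) ≤ M ^ 2 * n} : ℝ) ≤
        C * lam ^ n * M ^ Fintype.card Y := by
  refine ⟨1, one_pos, fun lam hlam => ?_⟩
  have hL : 0 < log lam := log_pos hlam
  refine ⟨min (log lam ^ 2 / (6 * exp 1) ^ 2) (1 / 4), by positivity, ?_⟩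
  intro Y _ _ n _ hYn M hM
  set d := Fintype.card Y
  have hdL : (6 * exp 1) ^ 2 * d ≤ n * log lam ^ 2 := by
    have := hYn.trans (mul_le_mul_of_nonneg_right (min_le_left _ _) n.cast_nonneg)
    rw [div_mul_eq_mul_div, le_div_iff₀ (by positivity)] at this
    linarith
  have hdM : 4 * d ≤ M ^ 2 * n := by
    have := hYn.trans (mul_le_mul_of_nonneg_right (min_le_right _ _) n.cast_nonneg)
    nlinarith [mul_le_mul_of_nonneg_right (one_le_pow₀ hM : 1 ≤ M ^ 2) n.cast_nonneg]
  have hfin : {x : Y → ℤ | (∑ y : Y, (x y : ℝ) ^ 2) ≤ M ^ 2 * n}.Finite := by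
    classical
    rw [setOf_sum_sq_le_eq_filter]
    exact finite_toSet _
  refine ⟨hfin, ?_⟩
  calc (Nat.card {x : Y → ℤ // (∑ y : Y, (x y : ℝ) ^ 2) ≤ M ^ 2 * n} : ℝ)
      ≤ (6 * exp 1 * √(M ^ 2 * n / d)) ^ d := natCard_sum_sq_le_pow hdM
    _ = M ^ d * (6 * exp 1 * √(n / d)) ^ d := by
        rw [mul_div_assoc, sqrt_mul (sq_nonneg M), sqrt_sq (by linarith), ← mul_pow]
        ring_nf
    _ ≤ M ^ d * lam ^ n := by
        gcongr
        exact pow_mul_sqrt_div_le_pow (by positivity) hlam Fintype.card_pos hdL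
    _ = 1 * lam ^ n * M ^ d := by ring
end

section
/- There exists a universal constant C > 0 with the following property. Let Γ be a countable discrete group and f ∈ ℤΓ be such that the convolution operator T_f on ℓ²(Γ) is positive and invertible. Then for every λ > 1 and ε > 0 there is δ > 0 such that for every nonempty finite F ⊆ Γ with |K_f·K_f·F ∖ F| ≤ δ|F|: the quotient group ℤ^F/f_Fℤ^F is finite, and every finite subset E ⊆ X_f satisfying d_{F,2}(x,y) > ε for all distinct x,y ∈ E has card(E) ≤ C · λ^{|F|} · card(ℤ^F/f_Fℤ^F). -/
open scoped Pointwise ENNReal symmDiff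
open Filter

noncomputable section

/-- `ℓ²(Γ)` with complex coefficients. -/
abbrev l2 (Γ : Type*) : Type _ := lp (fun _ : Γ => ℂ) 2

/-- `T` is the operator of left convolution by `f ∈ ℤΓ` on `ℓ²(Γ)`. -/
def IsConvOp {Γ : Type*} [Group Γ] (f : MonoidAlgebra ℤ Γ) (T : l2 Γ →L[ℂ] l2 Γ) : Prop :=
  ∀ (x : l2 Γ) (γ' : Γ), T x γ' = ∑ γ ∈ f.coeff.support, (f.coeff γ : ℂ) * x (γ⁻¹ * γ')

/-- The Fuglede-Kadison determinant of an operator `T` on `ℓ²(Γ)` with respect to the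
canonical trace: `exp((1/2)·Re⟨(log(T*T)) δ_e, δ_e⟩)`. -/
def fkDet {Γ : Type*} [Group Γ] (T : l2 Γ →L[ℂ] l2 Γ) : ℝ :=
  haveI := Classical.decEq Γ
  haveI : ContinuousFunctionalCalculus ℝ (l2 Γ →L[ℂ] l2 Γ) IsSelfAdjoint :=
    IsSelfAdjoint.instContinuousFunctionalCalculus
  Real.exp ((1 / 2) *
    (inner ℂ ((cfc Real.log (star T * T)) (lp.single (E := fun _ : Γ => ℂ) 2 (1 : Γ) 1))
      (lp.single (E := fun _ : Γ => ℂ) 2 (1 : Γ) (1 : ℂ)) : ℂ).re)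

/-- `X_f = {h ∈ (ℝ/ℤ)^Γ : f h = 0}`. -/
def Xset {Γ : Type*} [Group Γ] (f : MonoidAlgebra ℤ Γ) : Set (Γ → AddCircle (1 : ℝ)) :=
  {h | ∀ γ' : Γ, ∑ γ ∈ f.coeff.support, f.coeff γ • h (γ⁻¹ * γ') = 0}

/-- The `ℓ^∞` dynamical distance `d_{F,∞}(x,y) = max_{γ ∈ F} ϑ(x_γ, y_γ)` on `(ℝ/ℤ)^Γ`. -/
def dInf {Γ : Type*} (F : Finset Γ) (x y : Γ → AddCircle (1 : ℝ)) : ℝ :=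
  if hF : F.Nonempty then F.sup' hF fun γ => dist (x γ) (y γ) else 0

/-- The `ℓ²` dynamical distance `d_{F,2}(x,y) = (|F|⁻¹ ∑_{γ∈F} ϑ(x_γ,y_γ)²)^{1/2}`. -/
def d2 {Γ : Type*} (F : Finset Γ) (x y : Γ → AddCircle (1 : ℝ)) : ℝ :=
  Real.sqrt ((F.card : ℝ)⁻¹ * ∑ γ ∈ F, dist (x γ) (y γ) ^ 2)

/-- `‖f‖₁ = ∑_γ |f_γ|`. -/
def l1norm {Γ : Type*} [Group Γ] (f : MonoidAlgebra ℤ Γ) : ℝ :=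
  ∑ γ ∈ f.coeff.support, |(f.coeff γ : ℝ)|

/-- `K_f = supp f ∪ supp f* ∪ {e}`. -/
def Kf {Γ : Type*} [Group Γ] [DecidableEq Γ] (f : MonoidAlgebra ℤ Γ) : Finset Γ :=
  f.coeff.support ∪ f.coeff.support.image (·⁻¹) ∪ {1}

/-- The compression `f_F` of the convolution operator of `f` to a finite `F ⊆ Γ`, as an
`F × F` integer matrix with entries `(f_F)_{γ,γ'} = f (γ γ'⁻¹)`. -/
def fMat {Γ : Type*} [Group Γ] (f : MonoidAlgebra ℤ Γ) (F : Finset Γ) : Matrix ↥F ↥F ℤ :=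
  Matrix.of fun γ γ' => f.coeff ((γ : Γ) * (γ' : Γ)⁻¹)

/-- Maximal cardinality (in `[0,∞]`) of an `[F,∞,ε]`-separated subset of `X_f`. -/
def sepCard {Γ : Type*} [Group Γ] (f : MonoidAlgebra ℤ Γ) (F : Finset Γ) (ε : ℝ) : ℝ≥0∞ :=
  ⨆ (E : Finset (Γ → AddCircle (1 : ℝ)))
    (_ : ↑E ⊆ Xset f ∧ ∀ x ∈ E, ∀ y ∈ E, x ≠ y → ε < dInf F x y), (E.card : ℝ≥0∞)

/-- Minimal cardinality (in `[0,∞]`) of an `[F,∞,ε]`-spanning subset of `X_f`. -/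
def spanCard {Γ : Type*} [Group Γ] (f : MonoidAlgebra ℤ Γ) (F : Finset Γ) (ε : ℝ) : ℝ≥0∞ :=
  ⨅ (E : Finset (Γ → AddCircle (1 : ℝ)))
    (_ : ↑E ⊆ Xset f ∧ ∀ x ∈ Xset f, ∃ y ∈ E, dInf F x y ≤ ε), (E.card : ℝ≥0∞)

/-- A left Følner sequence: a sequence of nonempty finite subsets `F n` with
`|γ F_n △ F_n| / |F_n| → 0` for every `γ`. -/
def IsFolnerSeq {Γ : Type*} [Group Γ] [DecidableEq Γ] (F : ℕ → Finset Γ) : Prop :=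
  (∀ n, (F n).Nonempty) ∧ ∀ γ : Γ,
    Tendsto (fun n => ((((F n).image (γ * ·)) ∆ (F n)).card : ℝ) / ((F n).card : ℝ))
      atTop (nhds 0)

universe u

/-! A positive invertible `T_f` is coercive, `c‖x‖² ≤ Re⟪T_f x, x⟫` with `c > 0`, and testing this
on vectors supported in `F` shows that the matrix `f_F` is coercive too; hence `det f_F ≠ 0` and
`ℤ^F / f_F ℤ^F` is finite, of order `|det f_F|`.

For `h ∈ X_f` let `x ∈ ℝ^F` lift `h|_F`. At every `γ ∈ F` with `supp(f)⁻¹ γ ⊆ F` the equation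
`f h = 0` makes `(f_F x)_γ` an integer, and there are at most `|supp f| · |K_f K_f F ∖ F|` other
points of `F`. If `h, h'` give the same class of `round (f_F x)` modulo `f_F ℤ^F`, then, after
shifting `x'` by an integer vector, `u = x - x'` satisfies `‖f_F u‖² ≤` the number of those other points, so
`c² |F| d_{F,2}(h, h')² ≤ c² ‖u‖² ≤ ‖f_F u‖²` is small. For `δ ≪ c² ε²` the map
`h ↦ [round (f_F x)]` is therefore injective on `ε`-separated sets, and
`card E ≤ card (ℤ^F / f_F ℤ^F)`.
-/

open Matrix

theorem ContinuousLinearMap.IsPositive.exists_pos_mul_norm_sq_le_re_inner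
    {H : Type*} [NormedAddCommGroup H] [InnerProductSpace ℂ H] [CompleteSpace H]
    {T : H →L[ℂ] H} (hT : T.IsPositive) (hU : IsUnit T) :
    ∃ c > 0, ∀ x : H, c * ‖x‖ ^ 2 ≤ RCLike.re (inner ℂ (T x) x) := by
  rcases subsingleton_or_nontrivial H with hH | hH
  · exact ⟨1, one_pos, fun x => by simp [Subsingleton.elim x 0]⟩
  have hsp : IsStrictlyPositive T :=
    IsStrictlyPositive.iff_of_unital.mpr ⟨(nonneg_iff_isPositive T).mpr hT, hU⟩
  obtain ⟨c, hc, hcT⟩ := (CFC.exists_pos_algebraMap_le_iff hsp.isSelfAdjoint).mpr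
    fun _ hx => hsp.spectrum_pos hx
  refine ⟨c, hc, fun x => ?_⟩
  have := ((le_def _ T).mp hcT).re_inner_nonneg_left x
  simpa [Algebra.algebraMap_eq_smul_one, ← Complex.coe_smul, inner_sub_left, inner_smul_left,
    inner_self_eq_norm_sq_to_K, real_inner_smul_left, ← Complex.ofReal_pow] using this

theorem Finsupp.sum_smul_inv_mul_eq_sum_of_mem {Γ R M : Type*} [Group Γ] [Semiring R]
    [AddCommMonoid M] [Module R M] (a : Γ →₀ R) (φ : Γ → M) (F : Finset Γ) (γ : Γ)
    (hF : ∀ s ∈ a.support, φ (s⁻¹ * γ) ≠ 0 → s⁻¹ * γ ∈ F) :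
    ∑ s ∈ a.support, a s • φ (s⁻¹ * γ) = ∑ β ∈ F, a (γ * β⁻¹) • φ β := by
  refine Finset.sum_bij_ne_zero (fun s _ _ => s⁻¹ * γ) (fun s hs hne => hF s hs
    (fun h => hne (by rw [h, smul_zero]))) (fun s _ _ t _ _ h => inv_injective
    (mul_right_cancel h)) (fun β _ hne => ⟨γ * β⁻¹, ?_, ?_, by group⟩) (fun s _ _ => by simp)
  · exact Finsupp.mem_support_iff.mpr fun h => hne (by rw [h, zero_smul])
  · simpa using hne

theorem lp.inner_eq_sum_of_eq_zero {Γ : Type*} {F : Finset Γ} (g x : l2 Γ)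
    (hx : ∀ β ∉ F, x β = 0) : inner ℂ g x = ∑ β ∈ F, starRingEnd ℂ (g β) * x β := by
  rw [lp.inner_eq_tsum, tsum_eq_sum (s := F) fun β hβ => by simp [hx β hβ]]
  simp [mul_comm]

section Compression

variable {Γ : Type*} [DecidableEq Γ]

def extendToL2 (F : Finset Γ) (v : F → ℝ) : l2 Γ :=
  ⟨fun β => if hβ : β ∈ F then (v ⟨β, hβ⟩ : ℂ) else 0,
    (memℓp_zero <| F.finite_toSet.subset fun β hβ => by
      by_contra h; exact hβ (dif_neg h)).of_exponent_ge bot_le⟩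

theorem extendToL2_apply_of_mem {F : Finset Γ} (v : F → ℝ) (γ : F) :
    extendToL2 F v γ = v γ :=
  dif_pos γ.2

theorem extendToL2_apply_of_notMem {F : Finset Γ} (v : F → ℝ) {β : Γ} (hβ : β ∉ F) :
    extendToL2 F v β = 0 :=
  dif_neg hβ

theorem re_inner_extendToL2 {F : Finset Γ} (g : l2 Γ) (v : F → ℝ) :
    RCLike.re (inner ℂ g (extendToL2 F v)) = ∑ γ : F, (g γ).re * v γ := by
  rw [lp.inner_eq_sum_of_eq_zero _ _ fun β hβ => extendToL2_apply_of_notMem v hβ,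
    ← Finset.sum_coe_sort]
  simp [extendToL2_apply_of_mem]

variable [Group Γ]

theorem IsConvOp.apply_extendToL2 {f : MonoidAlgebra ℤ Γ} {T : l2 Γ →L[ℂ] l2 Γ}
    (hT : IsConvOp f T) (F : Finset Γ) (v : F → ℝ) (γ : F) :
    T (extendToL2 F v) γ = (((fMat f F).map (↑) *ᵥ v) γ : ℝ) := by
  rw [hT]
  simp_rw [← zsmul_eq_mul]
  rw [Finsupp.sum_smul_inv_mul_eq_sum_of_mem _ _ F _ fun s _ h => by
    by_contra hs; exact h (extendToL2_apply_of_notMem v hs), ← Finset.sum_coe_sort]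
  simp [Matrix.mulVec, dotProduct, fMat, extendToL2_apply_of_mem]

theorem IsConvOp.mul_dotProduct_self_le {f : MonoidAlgebra ℤ Γ} {T : l2 Γ →L[ℂ] l2 Γ}
    (hT : IsConvOp f T) {c : ℝ} (hc : ∀ x : l2 Γ, c * ‖x‖ ^ 2 ≤ RCLike.re (inner ℂ (T x) x))
    (F : Finset Γ) (v : F → ℝ) :
    c * (v ⬝ᵥ v) ≤ v ⬝ᵥ ((fMat f F).map (↑) *ᵥ v) := by
  have key := hc (extendToL2 F v)
  rw [← inner_self_eq_norm_sq (𝕜 := ℂ), re_inner_extendToL2, re_inner_extendToL2] at key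
  simpa [dotProduct, extendToL2_apply_of_mem, hT.apply_extendToL2, mul_comm] using key

end Compression

namespace Matrix

variable {n : Type*} [Fintype n]

theorem sq_mul_dotProduct_self_le {B : Matrix n n ℝ} {c : ℝ} (hc : 0 ≤ c)
    (hB : ∀ v : n → ℝ, c * (v ⬝ᵥ v) ≤ v ⬝ᵥ (B *ᵥ v)) (v : n → ℝ) :
    c ^ 2 * (v ⬝ᵥ v) ≤ (B *ᵥ v) ⬝ᵥ (B *ᵥ v) := by
  have hcs : (v ⬝ᵥ (B *ᵥ v)) ^ 2 ≤ (v ⬝ᵥ v) * ((B *ᵥ v) ⬝ᵥ (B *ᵥ v)) := by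
    simpa [dotProduct, sq] using Finset.sum_mul_sq_le_sq_mul_sq Finset.univ v (B *ᵥ v)
  rcases (show 0 ≤ v ⬝ᵥ v from dotProduct_self_star_nonneg v).eq_or_lt with hvv | hvv
  · rw [← hvv, mul_zero]
    exact dotProduct_self_star_nonneg _
  have hsq : (c * (v ⬝ᵥ v)) ^ 2 ≤ (v ⬝ᵥ (B *ᵥ v)) ^ 2 :=
    pow_le_pow_left₀ (by positivity) (hB v) 2
  refine le_of_mul_le_mul_left ?_ hvv
  nlinarith

variable [DecidableEq n]

theorem det_ne_zero_of_mul_dotProduct_self_le {A : Matrix n n ℤ} {c : ℝ} (hc : 0 < c)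
    (hA : ∀ v : n → ℝ, c * (v ⬝ᵥ v) ≤ v ⬝ᵥ (A.map (↑) *ᵥ v)) : A.det ≠ 0 := by
  intro h
  obtain ⟨v, hv0, hv⟩ := exists_mulVec_eq_zero_iff.mpr h
  have hcast : A.map (↑) *ᵥ (Int.cast ∘ v) = (0 : n → ℝ) := by
    ext i
    simpa [mulVec, dotProduct] using congrArg (Int.cast : ℤ → ℝ) (congrFun hv i)
  have hle := hA (Int.cast ∘ v)
  rw [hcast, dotProduct_zero] at hle
  have hzero : (Int.cast ∘ v : n → ℝ) = 0 :=
    dotProduct_self_eq_zero.mp (le_antisymm (nonpos_of_mul_nonpos_right hle hc)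
      (dotProduct_self_star_nonneg _))
  exact hv0 (funext fun i => by simpa using congrFun hzero i)

theorem natCard_quotient_range_mulVecLin {A : Matrix n n ℤ} (hA : A.det ≠ 0) :
    Nat.card ((n → ℤ) ⧸ LinearMap.range A.mulVecLin) = A.det.natAbs := by
  have hinj : Function.Injective A.mulVecLin :=
    mulVec_injective_of_det_mem_nonZeroDivisors (mem_nonZeroDivisors_of_ne_zero hA)
  rw [← Submodule.natAbs_det_equiv _ (LinearEquiv.ofInjective _ hinj), ← LinearMap.det_toLin']
  rfl

end Matrix

theorem AddCircle.dist_coe_le_abs_sub (p a b : ℝ) : dist (a : AddCircle p) b ≤ |a - b| := by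
  rw [dist_eq_norm, ← AddCircle.coe_sub, ← Real.norm_eq_abs]
  exact QuotientAddGroup.norm_mk_le_norm

theorem sq_sub_round_sub_sub_round_le_one (x y : ℝ) : (x - round x - (y - round y)) ^ 2 ≤ 1 := by
  have hx := abs_le.mp (abs_sub_round x)
  have hy := abs_le.mp (abs_sub_round y)
  nlinarith

theorem sq_mul_card_lt_sum_dist_sq_of_lt_d2 {Γ : Type*} {F : Finset Γ}
    {x y : Γ → AddCircle (1 : ℝ)} {ε : ℝ} (hε : 0 ≤ ε) (h : ε < d2 F x y) :
    ε ^ 2 * F.card < ∑ γ ∈ F, dist (x γ) (y γ) ^ 2 := by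
  have h2 := (Real.lt_sqrt hε).mp h
  rcases F.eq_empty_or_nonempty with rfl | hF
  · simp at h2
    nlinarith
  rwa [inv_mul_eq_div, lt_div_iff₀ (by exact_mod_cast hF.card_pos)] at h2

section Separation

variable {Γ : Type*} [Group Γ] [DecidableEq Γ] (f : MonoidAlgebra ℤ Γ) (F : Finset Γ)

def liftOnFinset (h : Γ → AddCircle (1 : ℝ)) : F → ℝ := fun γ => (h γ).out

def fInterior : Finset F := {γ | ∀ s ∈ f.coeff.support, s⁻¹ * (γ : Γ) ∈ F}

def roundClass (h : Γ → AddCircle (1 : ℝ)) : (F → ℤ) ⧸ LinearMap.range (fMat f F).mulVecLin :=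
  Submodule.Quotient.mk fun γ => round (((fMat f F).map (↑) *ᵥ liftOnFinset F h) γ)

variable {f F}

theorem card_compl_fInterior_le :
    (fInterior f F)ᶜ.card ≤ f.coeff.support.card * ((Kf f * (Kf f * F)) \ F).card := by
  refine (Finset.card_map (Function.Embedding.subtype (· ∈ F))).symm.le.trans
    ((Finset.card_le_card ?_).trans Finset.card_mul_le)
  intro x hx
  obtain ⟨γ, hγ, rfl⟩ := Finset.mem_map.mp hx
  simp only [fInterior, Finset.compl_filter, Finset.mem_filter, not_forall] at hγ
  obtain ⟨-, s, hs, hsγ⟩ := hγ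
  have hsK : s⁻¹ ∈ Kf f :=
    Finset.mem_union_left _ (Finset.mem_union_right _ (Finset.mem_image_of_mem _ hs))
  have h1K : (1 : Γ) ∈ Kf f := Finset.mem_union_right _ (Finset.mem_singleton_self 1)
  have hγK : (γ : Γ) ∈ Kf f * F := by simpa only [one_mul] using Finset.mul_mem_mul h1K γ.2
  exact Finset.mem_mul.mpr ⟨s, hs, s⁻¹ * γ, Finset.mem_sdiff.mpr
    ⟨Finset.mul_mem_mul hsK hγK, hsγ⟩, by simp⟩

theorem coe_mulVec_liftOnFinset_eq_zero {h : Γ → AddCircle (1 : ℝ)} (hh : h ∈ Xset f)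
    {γ : F} (hγ : γ ∈ fInterior f F) :
    ((((fMat f F).map (↑) *ᵥ liftOnFinset F h) γ : ℝ) : AddCircle (1 : ℝ)) = 0 := by
  have hint : ∀ s ∈ f.coeff.support, s⁻¹ * (γ : Γ) ∈ F := by simpa [fInterior] using hγ
  rw [← hh γ, Finsupp.sum_smul_inv_mul_eq_sum_of_mem _ _ F _ fun s hs _ => hint s hs,
    ← Finset.sum_coe_sort]
  simp [Matrix.mulVec, dotProduct, fMat, liftOnFinset]

theorem round_mulVec_liftOnFinset_of_mem_fInterior {h : Γ → AddCircle (1 : ℝ)}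
    (hh : h ∈ Xset f) {γ : F} (hγ : γ ∈ fInterior f F) :
    (round (((fMat f F).map (↑) *ᵥ liftOnFinset F h) γ) : ℝ) =
      ((fMat f F).map (↑) *ᵥ liftOnFinset F h) γ := by
  obtain ⟨m, hm⟩ := (AddCircle.coe_eq_zero_iff 1).mp (coe_mulVec_liftOnFinset_eq_zero hh hγ)
  rw [← hm, zsmul_eq_mul, mul_one, round_intCast]

theorem sq_mul_sum_dist_sq_le_of_roundClass_eq {c : ℝ} (hc : 0 ≤ c)
    (hA : ∀ v : F → ℝ, c * (v ⬝ᵥ v) ≤ v ⬝ᵥ ((fMat f F).map (↑) *ᵥ v))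
    {h h' : Γ → AddCircle (1 : ℝ)} (hh : h ∈ Xset f) (hh' : h' ∈ Xset f)
    (heq : roundClass f F h = roundClass f F h') :
    c ^ 2 * ∑ γ ∈ F, dist (h γ) (h' γ) ^ 2 ≤ (fInterior f F)ᶜ.card := by
  set B : Matrix F F ℝ := (fMat f F).map (↑)
  set x := liftOnFinset F h
  set x' := liftOnFinset F h'
  obtain ⟨w, hw⟩ := (Submodule.Quotient.eq _).mp heq
  set u : F → ℝ := x - x' - Int.cast ∘ w
  have hBu : ∀ γ, (B *ᵥ u) γ = (B *ᵥ x) γ - round ((B *ᵥ x) γ) -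
      ((B *ᵥ x') γ - round ((B *ᵥ x') γ)) := by
    intro γ
    have hBw : (B *ᵥ (Int.cast ∘ w)) γ = ((fMat f F *ᵥ w) γ : ℝ) := by
      simp [B, Matrix.mulVec, dotProduct]
    rw [Matrix.mulVec_sub, Matrix.mulVec_sub, Pi.sub_apply, Pi.sub_apply, hBw,
      show fMat f F *ᵥ w = _ from hw]
    simp only [Pi.sub_apply, Int.cast_sub]
    ring
  have hdist : ∑ γ ∈ F, dist (h γ) (h' γ) ^ 2 ≤ u ⬝ᵥ u := by
    rw [← Finset.sum_coe_sort]
    refine Finset.sum_le_sum fun γ _ => ?_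
    have hle : dist (h γ) (h' γ) ≤ |u γ| := by
      have hx : ((x γ : ℝ) : AddCircle (1 : ℝ)) = h γ := Quotient.out_eq _
      have hx' : ((x' γ + w γ : ℝ) : AddCircle (1 : ℝ)) = h' γ := by
        rw [AddCircle.coe_add, show ((w γ : ℝ) : AddCircle (1 : ℝ)) = 0 from
          (AddCircle.coe_eq_zero_iff 1).mpr ⟨w γ, by simp⟩, add_zero]
        exact Quotient.out_eq _
      rw [← hx, ← hx']
      convert AddCircle.dist_coe_le_abs_sub 1 _ _ using 2
      simp only [u, Pi.sub_apply, Function.comp_apply]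
      ring
    simpa [sq] using pow_le_pow_left₀ dist_nonneg hle 2
  have hBu_sq : (B *ᵥ u) ⬝ᵥ (B *ᵥ u) ≤ (fInterior f F)ᶜ.card := by
    rw [dotProduct, ← Finset.sum_add_sum_compl (fInterior f F)]
    have hint : ∑ γ ∈ fInterior f F, (B *ᵥ u) γ * (B *ᵥ u) γ = 0 :=
      Finset.sum_eq_zero fun γ hγ => by
        rw [hBu, round_mulVec_liftOnFinset_of_mem_fInterior hh hγ,
          round_mulVec_liftOnFinset_of_mem_fInterior hh' hγ]
        ring
    rw [hint, zero_add]
    have hle : ∀ γ ∈ (fInterior f F)ᶜ, (B *ᵥ u) γ * (B *ᵥ u) γ ≤ 1 := fun γ _ => by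
      simpa [hBu, sq] using sq_sub_round_sub_sub_round_le_one ((B *ᵥ x) γ) ((B *ᵥ x') γ)
    simpa using Finset.sum_le_card_nsmul _ _ 1 hle
  calc c ^ 2 * ∑ γ ∈ F, dist (h γ) (h' γ) ^ 2 ≤ c ^ 2 * (u ⬝ᵥ u) := by gcongr
    _ ≤ (B *ᵥ u) ⬝ᵥ (B *ᵥ u) := Matrix.sq_mul_dotProduct_self_le hc hA u
    _ ≤ _ := hBu_sq

theorem card_le_natCard_quotient_of_d2_separated {c ε : ℝ} (hc : 0 < c) (hε : 0 ≤ ε)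
    (hA : ∀ v : F → ℝ, c * (v ⬝ᵥ v) ≤ v ⬝ᵥ ((fMat f F).map (↑) *ᵥ v))
    (hbad : ((fInterior f F)ᶜ.card : ℝ) ≤ c ^ 2 * ε ^ 2 * F.card)
    [Finite ((F → ℤ) ⧸ LinearMap.range (fMat f F).mulVecLin)]
    {E : Finset (Γ → AddCircle (1 : ℝ))} (hE : ↑E ⊆ Xset f)
    (hsep : ∀ x ∈ E, ∀ y ∈ E, x ≠ y → ε < d2 F x y) :
    E.card ≤ Nat.card ((F → ℤ) ⧸ LinearMap.range (fMat f F).mulVecLin) := by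
  classical
  have hinj : Set.InjOn (roundClass f F) E := by
    intro x hx y hy hxy
    by_contra hne
    have hlt := sq_mul_card_lt_sum_dist_sq_of_lt_d2 hε (hsep x hx y hy hne)
    have hle := sq_mul_sum_dist_sq_le_of_roundClass_eq hc.le hA (hE hx) (hE hy) hxy
    nlinarith [pow_pos hc 2]
  have := Fintype.ofFinite ((F → ℤ) ⧸ LinearMap.range (fMat f F).mulVecLin)
  rw [← Finset.card_image_of_injOn hinj, Nat.card_eq_fintype_card]
  exact Finset.card_le_univ _

end Separation

/-- Lemma 5.3: there is a universal `C > 0` such that for `f ∈ ℤΓ` positive and invertible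
in `ℒΓ`, `λ > 1`, `ε > 0`, there is `δ > 0` so that for every nonempty finite `F ⊆ Γ` with
`|K_f² F ∖ F| ≤ δ |F|` the group `ℤ^F / f_F ℤ^F` is finite and every `[F,2,ε]`-separated
subset `E` of `X_f` satisfies `card E ≤ C λ^{|F|} card(ℤ^F / f_F ℤ^F)`. -/
theorem stmt6 : ∃ C : ℝ, 0 < C ∧
    ∀ (Γ : Type u) [Group Γ] [Countable Γ] [DecidableEq Γ],
    ∀ (f : MonoidAlgebra ℤ Γ) (T : l2 Γ →L[ℂ] l2 Γ),
      IsConvOp f T → T.IsPositive → IsUnit T →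
      ∀ lam : ℝ, 1 < lam → ∀ ε : ℝ, 0 < ε → ∃ δ : ℝ, 0 < δ ∧
        ∀ F : Finset Γ, F.Nonempty →
          (((Kf f * (Kf f * F)) \ F).card : ℝ) ≤ δ * F.card →
          Finite ((↥F → ℤ) ⧸ LinearMap.range (fMat f F).mulVecLin) ∧
          ∀ E : Finset (Γ → AddCircle (1 : ℝ)), ↑E ⊆ Xset f →
            (∀ x ∈ E, ∀ y ∈ E, x ≠ y → ε < d2 F x y) →
            (E.card : ℝ) ≤ C * lam ^ F.card *
              Nat.card ((↥F → ℤ) ⧸ LinearMap.range (fMat f F).mulVecLin) := by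
  refine ⟨1, one_pos, fun Γ _ _ _ f T hconv hpos hunit lam hlam ε hε => ?_⟩
  obtain ⟨c, hc, hcT⟩ := hpos.exists_pos_mul_norm_sq_le_re_inner hunit
  set N : ℝ := (f.coeff.support.card : ℝ) with hN
  refine ⟨c ^ 2 * ε ^ 2 / (N + 1), by positivity, fun F _ hδ => ?_⟩
  have hA := hconv.mul_dotProduct_self_le hcT F
  have hdet := Matrix.det_ne_zero_of_mul_dotProduct_self_le hc hA
  have hfin : Finite ((F → ℤ) ⧸ LinearMap.range (fMat f F).mulVecLin) :=
    Nat.finite_of_card_ne_zero <| by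
      rw [Matrix.natCard_quotient_range_mulVecLin hdet]
      exact Int.natAbs_ne_zero.mpr hdet
  have hbad : ((fInterior f F)ᶜ.card : ℝ) ≤ c ^ 2 * ε ^ 2 * F.card :=
    calc ((fInterior f F)ᶜ.card : ℝ) ≤ N * ((Kf f * (Kf f * F)) \ F).card := by
          rw [hN]
          exact_mod_cast card_compl_fInterior_le
      _ ≤ N * (c ^ 2 * ε ^ 2 / (N + 1) * F.card) := by gcongr
      _ ≤ c ^ 2 * ε ^ 2 * F.card := by
          rw [← mul_assoc, mul_div_assoc', div_mul_eq_mul_div, div_le_iff₀ (by positivity)]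
          nlinarith [show 0 ≤ c ^ 2 * ε ^ 2 * F.card by positivity]
  refine ⟨hfin, fun E hE hsep => ?_⟩
  calc (E.card : ℝ) ≤ Nat.card ((F → ℤ) ⧸ LinearMap.range (fMat f F).mulVecLin) := by
        exact_mod_cast card_le_natCard_quotient_of_d2_separated hc hε.le hA hbad hE hsep
    _ ≤ 1 * lam ^ F.card * Nat.card ((F → ℤ) ⧸ LinearMap.range (fMat f F).mulVecLin) := by
        rw [one_mul]
        exact le_mul_of_one_le_left (Nat.cast_nonneg _) (one_le_pow₀ hlam.le)
end
end

section
/- Let Γ be a countable group acting by measure-preserving measurable automorphisms on a standard probability space (Y, B_Y, μ), let G be a compact metrizable topological group on which Γ acts by continuous group automorphisms, and let σ : Γ × Y → G be a measurable cocycle, i.e., σ(γ₁γ₂, y) = σ(γ₁, γ₂y) · γ₁(σ(γ₂, y)) for all γ₁, γ₂ ∈ Γ and y ∈ Y. Then there exist a compact metrizable topological space Y', an action of Γ on Y' by homeomorphisms, a Γ-equivariant injective measurable map ψ : Y → Y' whose range is a Borel subset of Y' that is dense in Y', such that ψ is a Borel isomorphism onto its range, the pushforward measure ψ_*μ is a Γ-invariant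 Borel probability measure on Y', and there is a continuous map σ' : Γ × Y' → G satisfying the cocycle identity σ'(γ₁γ₂, y') = σ'(γ₁, γ₂y') · γ₁(σ'(γ₂, y')) and σ'(γ, ψ(y)) = σ(γ, y) for all γ ∈ Γ and y ∈ Y. -/
/-!
Code a point `y` by its orbit `γ ↦ (κ (γ • y), σ (·, γ • y))`, where `κ` is a Borel injection of
`Y` into Cantor space and `G` is replaced by a homeomorphic compact metric space in `Type`.
This embeds `Y` equivariantly into a compact metrizable product on which `Γ` acts continuously
by right translation, and `σ (γ, y)` is a continuous function of the code. The model is the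
closure of the image: the action laws and the cocycle identity hold on the dense image, hence
on its closure by continuity.
-/

open MeasureTheory

noncomputable section

/-- `(Y', ρ, ψ, σ')` is a topological model for the measurable cocycle `σ` over `(Y, μ)`:
`Y'` is a compact metrizable space with Borel measurable structure, `ρ` is an action of `Γ`
on `Y'` by homeomorphisms, `ψ` is an equivariant measurable injection of `Y` onto a dense
Borel subset of `Y'` which is a Borel isomorphism onto its range, the pushforward `ψ_*μ` is
a `Γ`-invariant Borel probability measure, and `σ'` is a continuous cocycle extending `σ`. -/
def IsTopModel {Γ : Type*} [Group Γ] {Y : Type*} [MeasurableSpace Y] (μ : Measure Y)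
    [MulAction Γ Y] {G : Type*} [Group G] [TopologicalSpace G] [MulDistribMulAction Γ G]
    (σ : Γ → Y → G) (Y' : Type) (topY' : TopologicalSpace Y')
    (measY' : MeasurableSpace Y') (ρ : Γ → Y' → Y') (ψ : Y → Y') (σ' : Γ → Y' → G) :
    Prop :=
  letI := topY'
  letI := measY'
  BorelSpace Y' ∧ CompactSpace Y' ∧ TopologicalSpace.MetrizableSpace Y' ∧
  (∀ γ : Γ, Continuous (ρ γ)) ∧ ρ 1 = id ∧ (∀ γ₁ γ₂ : Γ, ρ (γ₁ * γ₂) = ρ γ₁ ∘ ρ γ₂) ∧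
  Function.Injective ψ ∧ Measurable ψ ∧
  (∀ (γ : Γ) (y : Y), ψ (γ • y) = ρ γ (ψ y)) ∧
  MeasurableSet (Set.range ψ) ∧ Dense (Set.range ψ) ∧
  (∀ s : Set Y, MeasurableSet s → MeasurableSet (ψ '' s)) ∧
  IsProbabilityMeasure (Measure.map ψ μ) ∧
  (∀ γ : Γ, Measure.map (ρ γ) (Measure.map ψ μ) = Measure.map ψ μ) ∧
  (∀ γ : Γ, Continuous (σ' γ)) ∧
  (∀ (γ₁ γ₂ : Γ) (y' : Y'), σ' (γ₁ * γ₂) y' = σ' γ₁ (ρ γ₂ y') * γ₁ • σ' γ₂ y') ∧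
  (∀ (γ : Γ) (y : Y), σ' γ (ψ y) = σ γ y)

open Set Function TopologicalSpace

theorem exists_homeomorph_of_compact_metrizable (G : Type*) [TopologicalSpace G]
    [CompactSpace G] [MetrizableSpace G] :
    ∃ (H : Type) (_ : TopologicalSpace H), CompactSpace H ∧ MetrizableSpace H ∧
      Nonempty (G ≃ₜ H) := by
  let _ := metrizableSpaceMetric G
  obtain ⟨j, hj⟩ := exists_embedding_l_infty G
  exact ⟨range j, inferInstance, isCompact_iff_compactSpace.mp (isCompact_range hj.continuous),
    inferInstance, ⟨hj.toHomeomorph⟩⟩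

section OrbitMap

variable {Γ Y Z I : Type*} [Group Γ] [MulAction Γ Y] (e : Γ ≃ I)

/-- `I` is a relabelling of `Γ`; taking `I : Type` keeps the model space in `Type`. -/
def orbitMap (F : Y → Z) (y : Y) : I → Z := fun i => F (e.symm i • y)

def orbitShift (γ : Γ) (p : I → Z) : I → Z := fun i => p (e (e.symm i * γ))

@[simp]
theorem orbitMap_apply_one (F : Y → Z) (y : Y) : orbitMap e F y (e 1) = F y := by
  simp [orbitMap]

theorem orbitShift_orbitMap (F : Y → Z) (γ : Γ) (y : Y) :
    orbitShift e γ (orbitMap e F y) = orbitMap e F (γ • y) := by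
  funext i
  simp [orbitShift, orbitMap, mul_smul]

theorem continuous_orbitShift [TopologicalSpace Z] (γ : Γ) :
    Continuous (orbitShift (Z := Z) e γ) :=
  continuous_pi fun _ => continuous_apply _

theorem orbitMap_injective {F : Y → Z} (hF : Injective F) : Injective (orbitMap e F) :=
  fun y₁ y₂ h => hF <| by simpa using congrFun h (e 1)

theorem measurable_orbitMap [MeasurableSpace Y] [MeasurableSpace Z] {F : Y → Z}
    (hF : Measurable F) (hact : ∀ γ : Γ, Measurable fun y : Y => γ • y) :
    Measurable (orbitMap e F) :=
  measurable_pi_lambda _ fun i => hF.comp (hact (e.symm i))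

end OrbitMap

theorem exists_isTopModel_of_equivariant_embedding {Γ : Type*} [Group Γ]
    {Y : Type*} [MeasurableSpace Y] [StandardBorelSpace Y]
    (μ : Measure Y) [IsProbabilityMeasure μ] [MulAction Γ Y]
    (hmp : ∀ γ : Γ, MeasurePreserving (fun y : Y => γ • y) μ μ)
    {G : Type*} [Group G] [TopologicalSpace G] [ContinuousMul G] [T2Space G]
    [MulDistribMulAction Γ G] (hGcont : ∀ γ : Γ, Continuous fun g : G => γ • g)
    (σ : Γ → Y → G) (hσ : ∀ (γ₁ γ₂ : Γ) (y : Y), σ (γ₁ * γ₂) y = σ γ₁ (γ₂ • y) * γ₁ • σ γ₂ y)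
    {X : Type} [TopologicalSpace X] [CompactSpace X] [MetrizableSpace X]
    [MeasurableSpace X] [BorelSpace X]
    (ρ : Γ → X → X) (hρ : ∀ γ, Continuous (ρ γ)) (c : Γ → X → G) (hc : ∀ γ, Continuous (c γ))
    (Φ : Y → X) (hΦ : Measurable Φ) (hΦinj : Injective Φ)
    (hρΦ : ∀ γ y, ρ γ (Φ y) = Φ (γ • y)) (hcΦ : ∀ γ y, c γ (Φ y) = σ γ y) :
    ∃ ρ' ψ σ', IsTopModel μ σ (closure (range Φ)) inferInstance inferInstance ρ' ψ σ' := by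
  set M := closure (range Φ)
  have hmaps (γ : Γ) : MapsTo (ρ γ) M M := by
    refine MapsTo.closure ?_ (hρ γ)
    rintro _ ⟨y, rfl⟩
    exact ⟨γ • y, (hρΦ γ y).symm⟩
  let ρ' (γ : Γ) : M → M := (hmaps γ).restrict
  let ψ : Y → M := codRestrict Φ M fun y => subset_closure (mem_range_self y)
  let σ' (γ : Γ) (p : M) : G := c γ p
  have hρ' (γ : Γ) : Continuous (ρ' γ) := (hρ γ).restrict (hmaps γ)
  have hσ' (γ : Γ) : Continuous (σ' γ) := (hc γ).comp continuous_subtype_val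
  have hρψ (γ : Γ) (y : Y) : ρ' γ (ψ y) = ψ (γ • y) := Subtype.ext (hρΦ γ y)
  have hσψ (γ : Γ) (y : Y) : σ' γ (ψ y) = σ γ y := hcΦ γ y
  have hdense : Dense (range ψ) := by
    rw [Subtype.dense_iff, ← range_comp]
    exact subset_rfl
  have hψ : MeasurableEmbedding ψ :=
    hΦ.subtype_mk.measurableEmbedding ((injective_codRestrict _).2 hΦinj)
  refine ⟨ρ', ψ, σ', inferInstance, isCompact_iff_compactSpace.mp isClosed_closure.isCompact,
    inferInstance, hρ', ?_, ?_, (injective_codRestrict _).2 hΦinj, hψ.measurable,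
    fun γ y => (hρψ γ y).symm, hψ.measurableSet_range, hdense,
    fun _ => hψ.measurableSet_image.2, Measure.isProbabilityMeasure_map hψ.measurable.aemeasurable,
    ?_, hσ', ?_, hσψ⟩
  · refine (hρ' 1).ext_on hdense continuous_id ?_
    rintro _ ⟨y, rfl⟩
    simp [hρψ]
  · intro γ₁ γ₂
    refine (hρ' _).ext_on hdense ((hρ' γ₁).comp (hρ' γ₂)) ?_
    rintro _ ⟨y, rfl⟩
    simp [hρψ, mul_smul]
  · intro γ
    rw [Measure.map_map (hρ' γ).measurable hψ.measurable,
      show ρ' γ ∘ ψ = ψ ∘ (γ • ·) from funext (hρψ γ),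
      ← Measure.map_map hψ.measurable (hmp γ).measurable, (hmp γ).map_eq]
  · intro γ₁ γ₂
    refine congrFun <| (hσ' _).ext_on hdense
      (((hσ' γ₁).comp (hρ' γ₂)).mul ((hGcont γ₁).comp (hσ' γ₂))) ?_
    rintro _ ⟨y, rfl⟩
    simp [hρψ, hσψ, hσ]

theorem stmt10_general {Γ : Type*} [Group Γ] [Countable Γ]
    {Y : Type*} [MeasurableSpace Y] [StandardBorelSpace Y]
    (μ : Measure Y) [IsProbabilityMeasure μ]
    [MulAction Γ Y]
    (hmp : ∀ γ : Γ, MeasurePreserving (fun y : Y => γ • y) μ μ)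
    {G : Type*} [Group G] [TopologicalSpace G] [IsTopologicalGroup G] [CompactSpace G]
    [TopologicalSpace.MetrizableSpace G] [MeasurableSpace G] [BorelSpace G]
    [MulDistribMulAction Γ G] (hGcont : ∀ γ : Γ, Continuous fun g : G => γ • g)
    (σ : Γ → Y → G) (hσmeas : ∀ γ : Γ, Measurable (σ γ))
    (hσ : ∀ (γ₁ γ₂ : Γ) (y : Y), σ (γ₁ * γ₂) y = σ γ₁ (γ₂ • y) * γ₁ • σ γ₂ y) :
    ∃ (Y' : Type) (topY' : TopologicalSpace Y') (measY' : MeasurableSpace Y')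
      (ρ : Γ → Y' → Y') (ψ : Y → Y') (σ' : Γ → Y' → G),
      IsTopModel μ σ Y' topY' measY' ρ ψ σ' := by
  obtain ⟨H, _, _, _, ⟨h⟩⟩ := exists_homeomorph_of_compact_metrizable G
  let _ : MeasurableSpace H := borel H
  have : BorelSpace H := ⟨rfl⟩
  have : SecondCountableTopology H := inferInstance
  obtain ⟨κ, hκ, hκinj⟩ := MeasurableSpace.measurable_injection_nat_bool_of_countablySeparated Y
  let e := equivShrink.{0} Γ
  have : Countable (Shrink.{0} Γ) := Countable.of_equiv _ e
  let F (y : Y) : (ℕ → Bool) × (Shrink.{0} Γ → H) := (κ y, fun i => h (σ (e.symm i) y))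
  have hF : Measurable F :=
    hκ.prodMk (measurable_pi_lambda _ fun i => h.continuous.measurable.comp (hσmeas _))
  obtain ⟨ρ', ψ, σ', hmodel⟩ := exists_isTopModel_of_equivariant_embedding μ hmp hGcont σ hσ
    (orbitShift e) (continuous_orbitShift e) (fun γ p => h.symm ((p (e 1)).2 (e γ)))
    (fun γ => by fun_prop) (orbitMap e F) (measurable_orbitMap e hF fun γ => (hmp γ).measurable)
    (orbitMap_injective e fun _ _ hy => hκinj (congrArg Prod.fst hy))
    (orbitShift_orbitMap e F) (fun γ y => by simp [F])
  exact ⟨_, _, _, ρ', ψ, σ', hmodel⟩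

/-- Lemma 6.7 (topological model): every measurable cocycle for a measure-preserving
action of a countable group `Γ` on a standard probability space, with values in a compact
metrizable group `G` on which `Γ` acts by continuous automorphisms, extends to a
continuous cocycle on a compact metrizable topological model. -/
theorem stmt10 {Γ : Type*} [Group Γ] [Countable Γ]
    {Y : Type*} [MeasurableSpace Y] [StandardBorelSpace Y]
    (μ : Measure Y) [IsProbabilityMeasure μ]
    [MulAction Γ Y]
    (hmeas : ∀ γ : Γ, Measurable fun y : Y => γ • y)
    (hmp : ∀ γ : Γ, MeasurePreserving (fun y : Y => γ • y) μ μ)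
    {G : Type*} [Group G] [TopologicalSpace G] [IsTopologicalGroup G] [CompactSpace G]
    [TopologicalSpace.MetrizableSpace G] [MeasurableSpace G] [BorelSpace G]
    [MulDistribMulAction Γ G] (hGcont : ∀ γ : Γ, Continuous fun g : G => γ • g)
    (σ : Γ → Y → G) (hσmeas : ∀ γ : Γ, Measurable (σ γ))
    (hσ : ∀ (γ₁ γ₂ : Γ) (y : Y), σ (γ₁ * γ₂) y = σ γ₁ (γ₂ • y) * γ₁ • σ γ₂ y) :
    ∃ (Y' : Type) (topY' : TopologicalSpace Y') (measY' : MeasurableSpace Y')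
      (ρ : Γ → Y' → Y') (ψ : Y → Y') (σ' : Γ → Y' → G),
      IsTopModel μ σ Y' topY' measY' ρ ψ σ' :=
  stmt10_general μ hmp hGcont σ hσmeas hσ
end
end

section
/- Let A be a unital C*-algebra and let u ∈ A be a unitary element (u*u = uu* = 1). Then ‖1 + u − u²‖ < 3. -/
/-! On the unit circle `z̄ = z⁻¹`, so `|1 + z - z²| = |z̄ (1 + z - z²)| = |1 + (z̄ - z)| = |1 - 2i Im z|`,
which is at most `√5 < 3`. The spectrum of a unitary lies on the unit circle, and for the normal
element `u` the continuous functional calculus bounds `‖p(u)‖` by the maximum of `|p|` on its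
spectrum. -/

open Complex Polynomial

theorem Complex.norm_one_add_sub_sq_sq {z : ℂ} (hz : ‖z‖ = 1) :
    ‖1 + z - z ^ 2‖ ^ 2 = 1 + 4 * z.im ^ 2 := by
  have hconj : ‖1 + z - z ^ 2‖ = ‖1 + (starRingEnd ℂ z - z)‖ := by
    have hzz : starRingEnd ℂ z * z = 1 := by
      rw [mul_comm, Complex.mul_conj, Complex.normSq_eq_norm_sq, hz]; norm_num
    calc ‖1 + z - z ^ 2‖ = ‖starRingEnd ℂ z * (1 + z - z ^ 2)‖ := by
          rw [norm_mul, RCLike.norm_conj, hz, one_mul]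
      _ = ‖1 + (starRingEnd ℂ z - z)‖ := by
          congr 1; linear_combination (1 - z) * hzz
  have hcart : 1 + (starRingEnd ℂ z - z) = ((1 : ℝ) : ℂ) + ((-(2 * z.im) : ℝ) : ℂ) * I := by
    rw [← neg_sub, Complex.sub_conj]; push_cast; ring
  rw [hconj, hcart, Complex.sq_norm, Complex.normSq_add_mul_I]
  ring

theorem Complex.norm_one_add_sub_sq_lt_three {z : ℂ} (hz : ‖z‖ = 1) :
    ‖1 + z - z ^ 2‖ < 3 := by
  have him : z.im ^ 2 ≤ 1 := by
    nlinarith [Complex.abs_im_le_norm z, abs_nonneg z.im, sq_abs z.im]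
  have hsq : ‖1 + z - z ^ 2‖ ^ 2 < 3 ^ 2 := by
    rw [Complex.norm_one_add_sub_sq_sq hz]; linarith
  exact lt_of_pow_lt_pow_left₀ 2 (by norm_num) hsq

theorem norm_aeval_lt_of_mem_unitary {A : Type*} [CStarAlgebra A] {u : A}
    (hu : u ∈ unitary A) (p : ℂ[X]) {c : ℝ} (hc : 0 < c)
    (hp : ∀ z : ℂ, ‖z‖ = 1 → ‖p.eval z‖ < c) : ‖aeval u p‖ < c := by
  have : IsStarNormal u := isStarNormal_of_mem_unitary hu
  rw [← cfc_polynomial p u]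
  exact norm_cfc_lt hc fun z hz => hp z (spectrum.norm_eq_one_of_unitary hu hz)

/-- For a unitary element `u` of a unital C*-algebra, `‖1 + u - u²‖ < 3`. -/
theorem stmt18 {A : Type*} [NormedRing A] [StarRing A] [CStarRing A] [NormedAlgebra ℂ A]
    [CompleteSpace A] [StarModule ℂ A] (u : A)
    (h1 : star u * u = 1) (h2 : u * star u = 1) :
    ‖1 + u - u ^ 2‖ < 3 := by
  let : CStarAlgebra A := { }
  have hpoly : aeval u (1 + X - X ^ 2 : ℂ[X]) = 1 + u - u ^ 2 := by simp
  rw [← hpoly]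
  exact norm_aeval_lt_of_mem_unitary (Unitary.mem_iff.mpr ⟨h1, h2⟩) _ (by norm_num)
    fun z hz => by simpa using Complex.norm_one_add_sub_sq_lt_three hz
end

section
/- Let Γ be a group and let γ₁, γ₂ ∈ Γ generate a free subsemigroup, i.e., any two distinct nonempty words in the letters γ₁, γ₂ define distinct elements of Γ. Let w ∈ ℤΓ be the element w = (δ_e + δ_{γ₁} − δ_{γ₁²})·δ_{γ₂}, where the product is taken in the group ring ℤΓ. Then for every k ≥ 0 one has ∑_γ |(w^k)_γ| = 3^k, and the supports of the powers w^k (k = 0, 1, 2, …) are pairwise disjoint. -/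
/-!
Expanding the product, `w = δ_{γ₂} + δ_{γ₁γ₂} - δ_{γ₁γ₁γ₂}` and `w^k` is the signed sum of
`δ_{a_{i₁} ⋯ a_{i_k}}` over all `3^k` words in the three letters `a_i ∈ {γ₂, γ₁γ₂, γ₁γ₁γ₂}`.
These letters form a prefix code over `{γ₁, γ₂}`, and freeness of the semigroup (which extends to
the empty word, since `v² = v` forces `v = 1`) makes words in the `a_i` evaluate injectively.
So no cancellation occurs: every coefficient of `w^k` is `±1` on `3^k` distinct elements, and an
element of the support determines the length `k` of its word.
-/

theorem List.injective_flatMap_of_prefixFree {α β : Type*} (c : α → List β)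
    (hne : ∀ a, c a ≠ []) (hpre : ∀ a b, c a <+: c b → a = b) :
    Function.Injective fun L : List α => L.flatMap c := by
  intro L
  induction L with
  | nil =>
    rintro (_ | ⟨b, L'⟩) h
    · rfl
    · simp [hne b] at h
  | cons a L ih =>
    rintro (_ | ⟨b, L'⟩) h
    · simp [hne a] at h
    · replace h : c a ++ L.flatMap c = c b ++ L'.flatMap c := by simpa using h
      have hab : a = b :=
        (List.prefix_or_prefix_of_prefix (h ▸ List.prefix_append _ _) (List.prefix_append _ _)).elim
          (hpre a b) fun h => (hpre b a h).symm
      subst hab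
      rw [ih (List.append_cancel_left h)]

theorem List.injective_prod_map_of_injOn_ne_nil {α M : Type*} [Monoid M] (e : α → M)
    (he : Set.InjOn (fun w : List α => (w.map e).prod) {w | w ≠ []}) :
    Function.Injective fun w : List α => (w.map e).prod := by
  have prod_ne_one : ∀ w : List α, w ≠ [] → (w.map e).prod ≠ 1 := by
    intro w hw h1
    have : w ++ w = w := he (by simp [hw]) hw (by simp [h1])
    simp [hw] at this
  intro u v h
  rcases eq_or_ne u [] with rfl | hu <;> rcases eq_or_ne v [] with rfl | hv
  · rfl
  · exact absurd h.symm (prod_ne_one v hv)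
  · exact absurd h (prod_ne_one u hu)
  · exact he hu hv h

namespace MonoidAlgebra

variable {R M ι : Type*} [Fintype ι] (a : ι → M) (r : ι → R) (k : ℕ)

theorem sum_single_pow [Semiring R] [Monoid M] :
    (∑ i, single (a i) (r i)) ^ k =
      ∑ f : Fin k → ι, single ((List.ofFn f).map a).prod ((List.ofFn f).map r).prod := by
  induction k with
  | zero => simp [one_def]
  | succ k ih =>
    rw [pow_succ', ih, Finset.sum_mul_sum, ← (Fin.consEquiv fun _ => ι).sum_comp,
      Fintype.sum_prod_type]
    simp [Fin.consEquiv, List.ofFn_succ, single_mul_single]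

theorem coeff_sum_single_pow [Semiring R] [Monoid M] :
    ((∑ i, single (a i) (r i)) ^ k).coeff =
      Finsupp.mapDomain (fun f : Fin k → ι => ((List.ofFn f).map a).prod)
        (Finsupp.equivFunOnFinite.symm fun f => ((List.ofFn f).map r).prod) := by
  rw [sum_single_pow, coeff_sum, Finsupp.mapDomain, Finsupp.sum_fintype _ _ (by simp)]
  simp [coeff_single]

theorem disjoint_support_sum_single_pow [Semiring R] [Monoid M]
    (ha : Function.Injective fun L : List ι => (L.map a).prod) {k l : ℕ} (hkl : k ≠ l) :
    Disjoint ((∑ i, single (a i) (r i)) ^ k).coeff.support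
      ((∑ i, single (a i) (r i)) ^ l).coeff.support := by
  classical
  refine Finset.disjoint_left.2 fun γ hk hl => hkl ?_
  rw [coeff_sum_single_pow] at hk hl
  obtain ⟨f, -, rfl⟩ := Finset.mem_image.1 (Finsupp.mapDomain_support hk)
  obtain ⟨g, -, hfg⟩ := Finset.mem_image.1 (Finsupp.mapDomain_support hl)
  simpa using congrArg List.length (ha hfg.symm)

theorem sum_abs_coeff_sum_single_pow [CommRing R] [LinearOrder R] [IsStrictOrderedRing R]
    [Monoid M] (ha : Function.Injective fun L : List ι => (L.map a).prod) :
    ∑ γ ∈ ((∑ i, single (a i) (r i)) ^ k).coeff.support, |((∑ i, single (a i) (r i)) ^ k).coeff γ|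
      = (∑ i, |r i|) ^ k := by
  have hinj : Function.Injective fun f : Fin k → ι => ((List.ofFn f).map a).prod :=
    ha.comp List.ofFn_injective
  calc _ = ((∑ i, single (a i) (r i)) ^ k).coeff.sum fun _ c => |c| := rfl
    _ = ∑ f : Fin k → ι, |((List.ofFn f).map r).prod| := by
      rw [coeff_sum_single_pow, Finsupp.sum_mapDomain_index_inj hinj,
        Finsupp.sum_fintype _ _ (by simp)]
      rfl
    _ = (∑ i, |r i|) ^ k := by
      simp [List.map_ofFn, List.prod_ofFn, Finset.abs_prod, Fintype.sum_pow]

end MonoidAlgebra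

/-- The prefix code `γ₂, γ₁γ₂, γ₁γ₁γ₂`, written in the letters `true = γ₁`, `false = γ₂`. -/
def codeWord : Fin 3 → List Bool := ![[false], [true, false], [true, true, false]]

theorem codeWord_ne_nil (i : Fin 3) : codeWord i ≠ [] := by
  fin_cases i <;> simp [codeWord]

theorem codeWord_prefixFree (i j : Fin 3) : codeWord i <+: codeWord j → i = j := by
  revert i j; decide

/-- If `γ₁, γ₂` generate a free subsemigroup of `Γ` and
`w = (δ_e + δ_{γ₁} - δ_{γ₁²}) δ_{γ₂} ∈ ℤΓ`, then `‖w^k‖₁ = 3^k` for all `k ≥ 0` and the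
supports of the powers `w^k` are pairwise disjoint. -/
theorem stmt19 {Γ : Type*} [Group Γ] (γ₁ γ₂ : Γ)
    (hfree : ∀ w₁ w₂ : List Bool, w₁ ≠ [] → w₂ ≠ [] →
      (w₁.map fun b => if b then γ₁ else γ₂).prod = (w₂.map fun b => if b then γ₁ else γ₂).prod →
      w₁ = w₂)
    (w : MonoidAlgebra ℤ Γ)
    (hw : w = (MonoidAlgebra.single (1 : Γ) (1 : ℤ) + MonoidAlgebra.single γ₁ 1
        - MonoidAlgebra.single (γ₁ * γ₁) 1) * MonoidAlgebra.single γ₂ 1) :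
    (∀ k : ℕ, ∑ γ ∈ (w ^ k).coeff.support, |(w ^ k).coeff γ| = (3 : ℤ) ^ k) ∧
    (∀ k l : ℕ, k ≠ l → Disjoint (w ^ k).coeff.support (w ^ l).coeff.support) := by
  set e := fun b : Bool => if b then γ₁ else γ₂
  set a := fun i => ((codeWord i).map e).prod
  have ha : Function.Injective fun L : List (Fin 3) => (L.map a).prod := by
    have hword := List.injective_prod_map_of_injOn_ne_nil e fun u hu v hv => hfree u v hu hv
    have hletters := List.injective_flatMap_of_prefixFree codeWord codeWord_ne_nil codeWord_prefixFree
    convert hword.comp hletters using 2 with L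
    simp [a, List.flatMap_def, List.prod_flatten, Function.comp_def]
  have hw' : w = ∑ i, MonoidAlgebra.single (a i) (![1, 1, -1] i) := by
    simp [hw, a, e, codeWord, Fin.sum_univ_three, add_mul, MonoidAlgebra.single_mul_single,
      mul_assoc, sub_eq_add_neg, MonoidAlgebra.single_neg]
  subst hw'
  refine ⟨fun k => ?_, fun k l => MonoidAlgebra.disjoint_support_sum_single_pow a _ ha⟩
  rw [MonoidAlgebra.sum_abs_coeff_sum_single_pow a _ k ha]
  simp [Fin.sum_univ_three, Matrix.cons_val]
end
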